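/- Let F be a foliation of the plane by properly embedded lines, and let τ be a curve (continuous injective path) in the plane transverse to F. Then τ intersects each leaf of F at most once. (Model statement: if every leaf l of F separates the plane into two open half-planes and τ crosses from one side to the other at each intersection point with consistent transverse orientation, then τ ∩ l contains at most one point.) -/
import Mathlib


theorem transversal_meets_leaf_at_most_once
    (l U V : Set (ℝ × ℝ)) (hU : IsOpen U) (hV : IsOpen V) (hdisj : Disjoint U V)
    (hcompl : U ∪ V = lᶜ)
    (τ : ℝ → ℝ × ℝ) (hcont : Continuous τ) (hinj : Function.Injective τ)
    (hcross : ∀ t : ℝ, τ t ∈ l → ∃ ε > 0,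
      (∀ s, t - ε < s → s < t → τ s ∈ U) ∧ (∀ s, t < s → s < t + ε → τ s ∈ V)) :
    ∀ t₁ t₂ : ℝ, τ t₁ ∈ l → τ t₂ ∈ l → t₁ = t₂ := by
  have hlV : ∀ x ∈ l, x ∉ V := fun x hx hxV =>
    (show x ∈ lᶜ from hcompl ▸ Or.inr hxV) hx
  have hUV : ∀ x, x ∈ U → x ∈ V → False := fun x h1 h2 =>
    hdisj.ne_of_mem h1 h2 rfl
  have key : ∀ t₁ t₂ : ℝ, t₁ < t₂ → τ t₁ ∈ l → τ t₂ ∈ l → False := by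
    intro t₁ t₂ hlt h1 h2
    obtain ⟨ε, hε, hL, hR⟩ := hcross t₁ h1
    have ht2 : t₁ + ε ≤ t₂ := by
      by_contra h
      push_neg at h
      exact hlV _ h2 (hR t₂ hlt h)
    set S : Set ℝ := Set.Icc (t₁ + ε) t₂ ∩ τ ⁻¹' Vᶜ with hS
    have hSclosed : IsClosed S :=
      isClosed_Icc.inter (hV.isClosed_compl.preimage hcont)
    have hSne : S.Nonempty := ⟨t₂, ⟨ht2, le_refl _⟩, hlV _ h2⟩
    have hSbdd : BddBelow S := ⟨t₁ + ε, fun s hs => hs.1.1⟩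
    set c := sInf S with hc
    have hcS : c ∈ S := hSclosed.csInf_mem hSne hSbdd
    have hct1 : t₁ < c := lt_of_lt_of_le (by linarith) hcS.1.1
    have hbelow : ∀ s, t₁ < s → s < c → τ s ∈ V := by
      intro s hs1 hs2
      by_cases h : s < t₁ + ε
      · exact hR s hs1 h
      · push_neg at h
        by_contra hv
        have hsS : s ∈ S := ⟨⟨h, le_trans hs2.le hcS.1.2⟩, hv⟩
        exact absurd (csInf_le hSbdd hsS) (not_le.mpr hs2)
    have hcV : τ c ∉ V := hcS.2
    have hcase : τ c ∈ U ∨ τ c ∈ l := by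
      by_cases h : τ c ∈ l
      · exact Or.inr h
      · have : τ c ∈ U ∪ V := hcompl ▸ h
        rcases this with h' | h'
        · exact Or.inl h'
        · exact absurd h' hcV
    rcases hcase with hcU | hcl
    · have hmem : τ ⁻¹' U ∈ nhds c := (hU.preimage hcont).mem_nhds hcU
      obtain ⟨δ, hδ, hball⟩ := Metric.mem_nhds_iff.mp hmem
      set s := (max t₁ (c - δ) + c) / 2 with hs
      have hm1 : t₁ ≤ max t₁ (c - δ) := le_max_left _ _
      have hm2 : c - δ ≤ max t₁ (c - δ) := le_max_right _ _
      have hmlt : max t₁ (c - δ) < c := max_lt hct1 (by linarith)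
      have hs1 : t₁ < s := by simp only [hs]; linarith
      have hs2 : s < c := by simp only [hs]; linarith
      have hsU : τ s ∈ U := hball (by
        simp only [Metric.mem_ball, Real.dist_eq, hs]
        rw [abs_sub_lt_iff]
        constructor <;> linarith)
      exact hUV _ hsU (hbelow s hs1 hs2)
    · obtain ⟨δ, hδ, hL', _⟩ := hcross c hcl
      set s := (max t₁ (c - δ) + c) / 2 with hs
      have hm1 : t₁ ≤ max t₁ (c - δ) := le_max_left _ _
      have hm2 : c - δ ≤ max t₁ (c - δ) := le_max_right _ _
      have hmlt : max t₁ (c - δ) < c := max_lt hct1 (by linarith)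
      have hs1 : t₁ < s := by simp only [hs]; linarith
      have hs2 : s < c := by simp only [hs]; linarith
      have hsU : τ s ∈ U := hL' s (by simp only [hs]; linarith) hs2
      exact hUV _ hsU (hbelow s hs1 hs2)
  intro t₁ t₂ h1 h2
  rcases lt_trichotomy t₁ t₂ with h | h | h
  · exact absurd (key t₁ t₂ h h1 h2) not_false
  · exact h
  · exact absurd (key t₂ t₁ h h2 h1) not_false
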